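/- arXiv:1006.4995 — 4 statements merged into one kernel-verified Lean document; each statement's English description precedes it below -/
import Mathlib

section
/- Let w : ℤ → ℝ be supported in {-n, ..., 0} and let p(t) = Σ_{ν=0}^{n} t^ν · w(-ν) be its accompanying polynomial. Suppose t = 1 is a root of p of order at least m+1, i.e., p^(j)(1) = 0 for all j = 0, ..., m. Then for every integer x ≥ 1, Σ_{k=x}^{x+n} k^m · w(x-k) = 0. -/
open Polynomial Finset

private lemma iter_deriv_sum (N : ℕ) (c : ℕ → ℝ) : ∀ j : ℕ,
    iteratedDeriv j (fun t : ℝ => ∑ ν ∈ Finset.range N, t ^ ν * c ν) =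
      fun t => ∑ ν ∈ Finset.range N, (ν.descFactorial j : ℝ) * t ^ (ν - j) * c ν := by
  intro j
  induction j with
  | zero => simp
  | succ j ih =>
    funext t
    rw [iteratedDeriv_succ, ih]
    rw [deriv_fun_sum (fun ν _ => by fun_prop)]
    refine Finset.sum_congr rfl fun ν _ => ?_
    rw [show (fun t : ℝ => (ν.descFactorial j : ℝ) * t ^ (ν - j) * c ν)
        = fun t : ℝ => ((ν.descFactorial j : ℝ) * c ν) * t ^ (ν - j) by funext s; ring]
    rw [deriv_const_mul _ (by fun_prop), deriv_pow_field]
    rw [Nat.descFactorial_succ]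
    push_cast
    rw [Nat.sub_sub]
    ring

/-- If the accompanying polynomial of `w` (supported in `{-n,…,0}`) has a root of order
at least `m+1` at `t = 1`, then `∑_{k=x}^{x+n} k^m w(x-k) = 0` for every integer `x ≥ 1`. -/
theorem stmt_0 (n m : ℕ) (w : ℤ → ℝ)
    (hsupp : ∀ x : ℤ, w x ≠ 0 → -(n : ℤ) ≤ x ∧ x ≤ 0)
    (hroot : ∀ j : ℕ, j ≤ m →
      iteratedDeriv j (fun t : ℝ => ∑ ν ∈ Finset.range (n + 1), t ^ ν * w (-(ν : ℤ))) 1 = 0) :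
    ∀ x : ℤ, 1 ≤ x → ∑ k ∈ Finset.Icc x (x + (n : ℤ)), (k : ℝ) ^ m * w (x - k) = 0 := by
  -- descending-factorial moments vanish
  have hdf : ∀ j : ℕ, j ≤ m →
      ∑ ν ∈ Finset.range (n + 1), (ν.descFactorial j : ℝ) * w (-(ν : ℤ)) = 0 := by
    intro j hj
    have := hroot j hj
    rw [iter_deriv_sum] at this
    simpa using this
  -- power moments vanish
  have hpow : ∀ i : ℕ, i ≤ m →
      ∑ ν ∈ Finset.range (n + 1), (ν : ℝ) ^ i * w (-(ν : ℤ)) = 0 := by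
    intro i
    induction i using Nat.strong_induction_on with
    | _ i ih =>
      intro hi
      rcases Nat.eq_zero_or_pos i with rfl | hipos
      · simpa using hdf 0 (Nat.zero_le m)
      · set q : ℝ[X] := X ^ i - descPochhammer ℝ i with hq
        have hdeg : q.natDegree < i := by
          have h1 : (X ^ i : ℝ[X]).degree = (descPochhammer ℝ i).degree := by
            rw [degree_X_pow, Polynomial.degree_eq_natDegree (monic_descPochhammer ℝ i).ne_zero,
              descPochhammer_natDegree]
          have h2 : degree q < (i : ℕ) := by
            have := Polynomial.degree_sub_lt h1 (pow_ne_zero i Polynomial.X_ne_zero) (by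
              simp [Polynomial.Monic.leadingCoeff (monic_descPochhammer ℝ i)])
            rwa [degree_X_pow] at this
          rcases eq_or_ne q 0 with h0 | h0
          · rw [h0]; simpa using hipos
          · exact (Polynomial.natDegree_lt_iff_degree_lt h0).mpr h2
        have hsplit : ∀ ν : ℕ, (ν : ℝ) ^ i =
            (ν.descFactorial i : ℝ) + ∑ j ∈ Finset.range i, q.coeff j * (ν : ℝ) ^ j := by
          intro ν
          have he : q.eval (ν : ℝ) = ∑ j ∈ Finset.range i, q.coeff j * (ν : ℝ) ^ j :=
            Polynomial.eval_eq_sum_range' hdeg _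
          have : (ν : ℝ) ^ i = (descPochhammer ℝ i).eval (ν : ℝ) + q.eval (ν : ℝ) := by
            simp [hq]
          rw [this, he, descPochhammer_eval_eq_descFactorial]
        calc ∑ ν ∈ Finset.range (n + 1), (ν : ℝ) ^ i * w (-(ν : ℤ))
            = ∑ ν ∈ Finset.range (n + 1), ((ν.descFactorial i : ℝ) * w (-(ν : ℤ))
              + ∑ j ∈ Finset.range i, q.coeff j * ((ν : ℝ) ^ j * w (-(ν : ℤ)))) := by
              refine Finset.sum_congr rfl fun ν _ => ?_
              rw [hsplit ν, add_mul, Finset.sum_mul]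
              simp [mul_assoc]
          _ = 0 := by
              rw [Finset.sum_add_distrib, hdf i hi, zero_add, Finset.sum_comm]
              refine Finset.sum_eq_zero fun j hj => ?_
              rw [← Finset.mul_sum, ih j (Finset.mem_range.mp hj)
                (le_of_lt (lt_of_lt_of_le (Finset.mem_range.mp hj) hi)), mul_zero]
  -- reindex and expand
  intro x _
  have hre : ∑ k ∈ Finset.Icc x (x + (n : ℤ)), (k : ℝ) ^ m * w (x - k)
      = ∑ ν ∈ Finset.range (n + 1), ((ν : ℝ) + (x : ℝ)) ^ m * w (-(ν : ℤ)) := by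
    refine Finset.sum_nbij' (fun k => (k - x).toNat) (fun ν => x + (ν : ℤ))
      ?_ ?_ ?_ ?_ ?_
    · intro k hk
      simp only [Finset.mem_Icc] at hk
      simp only [Finset.mem_range]
      omega
    · intro ν hν
      simp only [Finset.mem_range] at hν
      simp only [Finset.mem_Icc]
      omega
    · intro k hk
      simp only [Finset.mem_Icc] at hk
      show x + (((k - x).toNat : ℕ) : ℤ) = k
      omega
    · intro ν hν
      simp
    · intro k hk
      simp only [Finset.mem_Icc] at hk
      have h1 : ((k - x).toNat : ℤ) = k - x := Int.toNat_of_nonneg (by omega)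
      have h2 : -(((k - x).toNat : ℕ) : ℤ) = x - k := by omega
      have h3 : (((k - x).toNat : ℕ) : ℝ) + (x : ℝ) = (k : ℝ) := by
        have h4 : (((k - x).toNat : ℕ) : ℝ) = (k : ℝ) - (x : ℝ) := by
          exact_mod_cast congrArg (Int.cast : ℤ → ℝ) h1
        rw [h4]; ring
      rw [h2, h3]
  rw [hre]
  have : ∀ ν : ℕ, ((ν : ℝ) + (x : ℝ)) ^ m
      = ∑ i ∈ Finset.range (m + 1), (ν : ℝ) ^ i * (x : ℝ) ^ (m - i) * (m.choose i : ℝ) :=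
    fun ν => add_pow _ _ m
  simp_rw [this, Finset.sum_mul]
  rw [Finset.sum_comm]
  refine Finset.sum_eq_zero fun i hi => ?_
  have hi' : i ≤ m := by simpa [Nat.lt_succ_iff] using Finset.mem_range.mp hi
  calc ∑ ν ∈ Finset.range (n + 1), (ν : ℝ) ^ i * (x : ℝ) ^ (m - i) * (m.choose i : ℝ) * w (-(ν : ℤ))
      = ((x : ℝ) ^ (m - i) * (m.choose i : ℝ)) *
        ∑ ν ∈ Finset.range (n + 1), (ν : ℝ) ^ i * w (-(ν : ℤ)) := by
        rw [Finset.mul_sum]; refine Finset.sum_congr rfl fun ν _ => by ring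
    _ = 0 := by rw [hpow i hi', mul_zero]
end

section
/- Let w : ℤ → ℝ be such that the Laurent series F(t) = Σ_{ν∈ℤ} t^ν · w(-ν) converges absolutely for all t in (1-ε, 1+ε) for some ε > 0, and suppose F has a root of order exactly m at t = 1 with c = F^(m)(1). Then for every integer x ≥ 1, Σ_{k∈ℤ} k^m · w(x-k) = c, the series being absolutely convergent; and if the order of the root at t = 1 exceeds D, then Σ_{k∈ℤ} k^D · w(x-k) = 0 for all x ≥ 1. -/
open Polynomial in
lemma stmt5_aux_poly : ∀ (n : ℕ) (p : Polynomial ℝ), p.natDegree ≤ n →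
    ∃ c : ℕ → ℝ, c n = p.coeff n ∧
      ∀ t : ℝ, p.eval t = ∑ j ∈ Finset.range (n+1), c j * (descPochhammer ℝ j).eval t := by
  intro n
  induction n with
  | zero =>
    intro p hp
    refine ⟨fun _ => p.coeff 0, rfl, fun t => ?_⟩
    rw [Polynomial.eq_C_of_natDegree_le_zero hp]
    simp
  | succ n ih =>
    intro p hp
    set q := p - Polynomial.C (p.coeff (n+1)) * descPochhammer ℝ (n+1) with hq
    have hmon : (descPochhammer ℝ (n+1)).Monic := monic_descPochhammer ℝ (n+1)
    have hdeg : (descPochhammer ℝ (n+1)).natDegree = n+1 := descPochhammer_natDegree ℝ (n+1)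
    have hdq : q.natDegree ≤ n := by
      refine Polynomial.natDegree_le_iff_coeff_eq_zero.mpr fun N hN => ?_
      rcases eq_or_lt_of_le (Nat.succ_le_of_lt hN) with hN' | hN'
      · have hlead : (descPochhammer ℝ (n+1)).coeff (n+1) = 1 := by
          have := hmon.coeff_natDegree
          rwa [hdeg] at this
        simp [hq, ← hN', Polynomial.coeff_sub, Polynomial.coeff_C_mul, hlead]
      · have h1 : p.coeff N = 0 := Polynomial.coeff_eq_zero_of_natDegree_lt (lt_of_le_of_lt hp hN')
        have h2 : (descPochhammer ℝ (n+1)).coeff N = 0 :=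
          Polynomial.coeff_eq_zero_of_natDegree_lt (by rw [hdeg]; exact hN')
        simp [hq, Polynomial.coeff_sub, Polynomial.coeff_C_mul, h1, h2]
    obtain ⟨c, hc, hsum⟩ := ih q hdq
    refine ⟨fun j => if j = n+1 then p.coeff (n+1) else c j, by simp, fun t => ?_⟩
    rw [Finset.sum_range_succ]
    have hqe : q.eval t = ∑ j ∈ Finset.range (n+1), c j * (descPochhammer ℝ j).eval t := hsum t
    have hpe : p.eval t = q.eval t + p.coeff (n+1) * (descPochhammer ℝ (n+1)).eval t := by
      have : p = q + Polynomial.C (p.coeff (n+1)) * descPochhammer ℝ (n+1) := by rw [hq]; ring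
      conv_lhs => rw [this]
      rw [Polynomial.eval_add, Polynomial.eval_mul, Polynomial.eval_C]
    rw [hpe, hqe]
    congr 1
    · refine Finset.sum_congr rfl fun j hj => ?_
      have hj' : j ≠ n+1 := by have := Finset.mem_range.mp hj; omega
      simp [hj']
    · simp

lemma stmt5_aux_grow (i : ℕ) (M q Q : ℝ) (hM : 0 ≤ M) (hq : 0 < q) (hqQ : q < Q) :
    ∃ C : ℝ, 0 ≤ C ∧ ∀ n : ℕ, ((n:ℝ) + M) ^ i * q ^ n ≤ C * Q ^ n := by
  have hQ0 : 0 < Q := lt_trans hq hqQ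
  have hr0 : 0 ≤ q / Q := div_nonneg hq.le hQ0.le
  have hr1 : q / Q < 1 := (div_lt_one hQ0).mpr hqQ
  have hs : Summable (fun n : ℕ => (n:ℝ) ^ i * (q/Q) ^ n) :=
    summable_pow_mul_geometric_of_norm_lt_one i
      (by rw [Real.norm_eq_abs, abs_of_nonneg hr0]; exact hr1)
  obtain ⟨C0, hC0⟩ := hs.tendsto_atTop_zero.bddAbove_range
  set C1 := max C0 1 with hC1def
  have hC1pos : (0:ℝ) < C1 := lt_of_lt_of_le one_pos (le_max_right _ _)
  have hbd : ∀ n : ℕ, (n:ℝ) ^ i * (q/Q) ^ n ≤ C1 := fun n =>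
    le_trans (hC0 (Set.mem_range_self n)) (le_max_left _ _)
  refine ⟨(M+1)^i * (C1 * Q / q), by positivity, fun n => ?_⟩
  have h2 : ((n:ℝ)+M)^i ≤ (M+1)^i * ((n:ℝ)+1)^i := by
    rw [← mul_pow]
    apply pow_le_pow_left₀ (by positivity)
    nlinarith [mul_nonneg (Nat.cast_nonneg n : (0:ℝ) ≤ n) hM]
  have h3 : ((n:ℝ)+1)^i * ((q/Q)^n * (q/Q)) ≤ C1 := by
    have := hbd (n+1)
    rw [← pow_succ]
    push_cast at this
    exact this
  have h4 : ((n:ℝ)+1)^i * (q/Q)^n ≤ C1 * Q / q := by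
    rw [le_div_iff₀ hq]
    calc ((n:ℝ)+1)^i * (q/Q)^n * q = (((n:ℝ)+1)^i * ((q/Q)^n * (q/Q))) * Q := by
          field_simp
      _ ≤ C1 * Q := mul_le_mul_of_nonneg_right h3 hQ0.le
  have main : ((n:ℝ)+M)^i * (q/Q)^n ≤ (M+1)^i * (C1*Q/q) := by
    calc ((n:ℝ)+M)^i * (q/Q)^n ≤ ((M+1)^i * ((n:ℝ)+1)^i) * (q/Q)^n :=
          mul_le_mul_of_nonneg_right h2 (by positivity)
      _ = (M+1)^i * (((n:ℝ)+1)^i * (q/Q)^n) := by ring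
      _ ≤ (M+1)^i * (C1*Q/q) := mul_le_mul_of_nonneg_left h4 (by positivity)
  have e : (q/Q)^n * Q^n = q^n := by
    rw [div_pow, div_mul_cancel₀]
    positivity
  calc ((n:ℝ)+M)^i * q^n = (((n:ℝ)+M)^i * (q/Q)^n) * Q^n := by rw [← e]; ring
    _ ≤ ((M+1)^i * (C1*Q/q)) * Q^n := mul_le_mul_of_nonneg_right main (by positivity)

set_option maxHeartbeats 1000000 in
/-- For `w : ℤ → ℝ` whose Laurent series `F(t) = ∑_ν t^ν w(-ν)` converges absolutely on
`(1-ε, 1+ε)`: if `F` has a root of order exactly `m` at `t = 1` with `c = F^{(m)}(1)`, then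
`∑_{k∈ℤ} k^m w(x-k) = c` (absolutely convergent) for all integers `x ≥ 1`; and if the root
order exceeds `D` then `∑_{k∈ℤ} k^D w(x-k) = 0` for all `x ≥ 1`. -/
theorem stmt_5 (ε : ℝ) (hε : 0 < ε) (w : ℤ → ℝ) (m : ℕ)
    (hconv : ∀ t ∈ Set.Ioo (1 - ε) (1 + ε), Summable fun ν : ℤ => |t ^ ν * w (-ν)|)
    (F : ℝ → ℝ) (hFdef : F = fun t : ℝ => ∑' ν : ℤ, t ^ ν * w (-ν))
    (hroot : ∀ j : ℕ, j < m → iteratedDeriv j F 1 = 0)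
    (hc : iteratedDeriv m F 1 ≠ 0) :
    (∀ x : ℤ, 1 ≤ x →
      (Summable fun k : ℤ => |(k : ℝ) ^ m * w (x - k)|) ∧
      ∑' k : ℤ, (k : ℝ) ^ m * w (x - k) = iteratedDeriv m F 1) ∧
    ∀ D : ℕ, (∀ j : ℕ, j ≤ D → iteratedDeriv j F 1 = 0) →
      ∀ x : ℤ, 1 ≤ x → ∑' k : ℤ, (k : ℝ) ^ D * w (x - k) = 0 := by
  -- basic setup
  set r : ℝ := min ε 1 with hrdef
  have hr0 : 0 < r := lt_min hε one_pos
  have hrε : r ≤ ε := min_le_left _ _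
  have hr1 : r ≤ 1 := min_le_right _ _
  set a : ℝ := 1 - r/2 with hadef
  set b : ℝ := 1 + r/2 with hbdef
  set tm : ℝ := 1 - 3*r/4 with htmdef
  set tp : ℝ := 1 + 3*r/4 with htpdef
  have ha0 : 0 < a := by simp only [hadef]; linarith
  have ha1 : a < 1 := by simp only [hadef]; linarith
  have hb1 : 1 < b := by simp only [hbdef]; linarith
  have htm0 : 0 < tm := by simp only [htmdef]; linarith
  have htma : tm < a := by simp only [htmdef, hadef]; linarith
  have hbtp : b < tp := by simp only [hbdef, htpdef]; linarith
  have htp1 : 1 < tp := lt_trans hb1 hbtp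
  have htmmem : tm ∈ Set.Ioo (1 - ε) (1 + ε) := by
    constructor <;> simp only [htmdef] <;> nlinarith
  have htpmem : tp ∈ Set.Ioo (1 - ε) (1 + ε) := by
    constructor <;> simp only [htpdef] <;> nlinarith
  have h1mem : (1:ℝ) ∈ Set.Icc a b := ⟨ha1.le, hb1.le⟩
  -- base summable majorant
  have habs : ∀ t : ℝ, 0 < t → (fun ν : ℤ => |t ^ ν * w (-ν)|) = fun ν : ℤ => t ^ ν * |w (-ν)| := by
    intro t ht
    funext ν
    rw [abs_mul, abs_of_pos (zpow_pos ht ν)]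
  have hW : Summable (fun ν : ℤ => tm ^ ν * |w (-ν)| + tp ^ ν * |w (-ν)|) := by
    have h1 := hconv tm htmmem
    have h2 := hconv tp htpmem
    rw [habs tm htm0] at h1
    rw [habs tp (lt_trans one_pos htp1)] at h2
    exact h1.add h2
  -- monotonicity of zpow in the base over [a,b]
  have hmono : ∀ t ∈ Set.Icc a b, ∀ k : ℤ, t ^ k ≤ a ^ k + b ^ k := by
    rintro t ⟨hta, htb⟩ k
    have ht0 : 0 < t := lt_of_lt_of_le ha0 hta
    rcases le_or_gt 0 k with hk | hk
    · obtain ⟨n, rfl⟩ := Int.eq_ofNat_of_zero_le hk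
      have h1 : t ^ (n:ℤ) ≤ b ^ (n:ℤ) := by
        rw [zpow_natCast, zpow_natCast]
        exact pow_le_pow_left₀ ht0.le htb n
      have h2 : 0 < a ^ (n:ℤ) := zpow_pos ha0 _
      linarith
    · have h1 : t ^ k ≤ a ^ k := by
        have hnk : 0 ≤ -k := by omega
        obtain ⟨n, hn⟩ := Int.eq_ofNat_of_zero_le hnk
        have hkn : k = -(n:ℤ) := by omega
        rw [hkn, zpow_neg, zpow_neg, zpow_natCast, zpow_natCast]
        exact inv_anti₀ (pow_pos ha0 n) (pow_le_pow_left₀ ha0.le hta n)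
      have h2 : 0 < b ^ k := zpow_pos (lt_trans ha0 (by linarith)) _
      linarith
  -- core estimate
  have core : ∀ (i : ℕ) (M : ℝ), 0 ≤ M → ∃ C : ℝ, 0 ≤ C ∧ ∀ ν : ℤ, ∀ t ∈ Set.Icc a b,
      (|(ν:ℝ)| + M) ^ i * t ^ (ν - (i:ℤ)) ≤ C * (tm ^ ν + tp ^ ν) := by
    intro i M hM
    obtain ⟨C1, hC10, hC1⟩ := stmt5_aux_grow i M 1 tp hM one_pos htp1
    obtain ⟨C2, hC20, hC2⟩ := stmt5_aux_grow i M b tp hM (lt_trans ha0 (by linarith)) hbtp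
    obtain ⟨C3, hC30, hC3⟩ := stmt5_aux_grow i M a⁻¹ tm⁻¹ hM (inv_pos.mpr ha0)
      (by exact inv_strictAnti₀ htm0 htma)
    obtain ⟨C4, hC40, hC4⟩ := stmt5_aux_grow i M 1 tm⁻¹ hM one_pos
      ((one_lt_inv₀ htm0).mpr (by simp only [htmdef]; linarith))
    have hb0 : (0:ℝ) < b := lt_trans ha0 (by linarith)
    refine ⟨(a^i)⁻¹*(C1+C3) + (b^i)⁻¹*(C2+C4), by positivity, ?_⟩
    have hainv : (0:ℝ) ≤ (a^i)⁻¹ := by positivity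
    have hbinv : (0:ℝ) ≤ (b^i)⁻¹ := by positivity
    have hSle : ∀ S : ℝ, S = (a^i)⁻¹*C1 + (b^i)⁻¹*C2 ∨ S = (a^i)⁻¹*C3 + (b^i)⁻¹*C4 →
        S ≤ (a^i)⁻¹*(C1+C3) + (b^i)⁻¹*(C2+C4) := by
      rintro S (rfl | rfl) <;>
        linarith [mul_nonneg hainv hC10, mul_nonneg hainv hC30,
          mul_nonneg hbinv hC20, mul_nonneg hbinv hC40]
    intro ν t ht
    have step1 : (|(ν:ℝ)| + M) ^ i * t ^ (ν - (i:ℤ)) ≤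
        (|(ν:ℝ)| + M) ^ i * (a ^ (ν - (i:ℤ)) + b ^ (ν - (i:ℤ))) :=
      mul_le_mul_of_nonneg_left (hmono t ht _) (by positivity)
    refine le_trans step1 ?_
    have hCnn : (0:ℝ) ≤ (a^i)⁻¹*(C1+C3) + (b^i)⁻¹*(C2+C4) := by positivity
    obtain ⟨n, rfl | rfl⟩ := Int.eq_nat_or_neg ν
    · -- nonnegative case
      have habsn : |((n:ℤ):ℝ)| = (n:ℝ) := by
        push_cast; exact abs_of_nonneg (Nat.cast_nonneg n)
      have hza : a ^ ((n:ℤ) - (i:ℤ)) = (a^i)⁻¹ * a^n := by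
        rw [zpow_sub₀ ha0.ne', zpow_natCast, zpow_natCast, div_eq_mul_inv]; ring
      have hzb : b ^ ((n:ℤ) - (i:ℤ)) = (b^i)⁻¹ * b^n := by
        rw [zpow_sub₀ hb0.ne', zpow_natCast, zpow_natCast, div_eq_mul_inv]; ring
      rw [habsn, hza, hzb]
      have ba : ((n:ℝ)+M)^i * a^n ≤ C1 * tp^n := by
        have h1 : ((n:ℝ)+M)^i * a^n ≤ ((n:ℝ)+M)^i * 1^n :=
          mul_le_mul_of_nonneg_left (pow_le_pow_left₀ ha0.le ha1.le n) (by positivity)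
        exact le_trans h1 (hC1 n)
      have bb : ((n:ℝ)+M)^i * b^n ≤ C2 * tp^n := hC2 n
      have e1 : ((n:ℝ)+M)^i * ((a^i)⁻¹ * a^n + (b^i)⁻¹ * b^n) =
          (a^i)⁻¹ * (((n:ℝ)+M)^i * a^n) + (b^i)⁻¹ * (((n:ℝ)+M)^i * b^n) := by ring
      rw [e1]
      have e2 : ((a:ℝ)^i)⁻¹ * (((n:ℝ)+M)^i * a^n) + (b^i)⁻¹ * (((n:ℝ)+M)^i * b^n) ≤
          ((a^i)⁻¹*C1 + (b^i)⁻¹*C2) * tp^n := by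
        have h5 := mul_le_mul_of_nonneg_left ba hainv
        have h6 := mul_le_mul_of_nonneg_left bb hbinv
        ring_nf at h5 h6 ⊢
        linarith
      refine le_trans e2 ?_
      have htpz : tp ^ ((n:ℤ)) = tp ^ n := zpow_natCast tp n
      have htmz : (0:ℝ) ≤ tm ^ ((n:ℤ)) := (zpow_pos htm0 _).le
      have e3 : ((a^i)⁻¹*C1 + (b^i)⁻¹*C2) * tp^n ≤
          ((a^i)⁻¹*(C1+C3) + (b^i)⁻¹*(C2+C4)) * tp^n :=
        mul_le_mul_of_nonneg_right (hSle _ (Or.inl rfl)) (by positivity)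
      refine le_trans e3 ?_
      rw [mul_add, htpz]
      linarith [mul_nonneg hCnn htmz]
    · -- negative case
      have habsn : |(Int.cast (-(n:ℤ)) : ℝ)| = (n:ℝ) := by
        push_cast
        rw [abs_neg]; exact abs_of_nonneg (Nat.cast_nonneg n)
      have hza : a ^ ((-(n:ℤ)) - (i:ℤ)) = (a^i)⁻¹ * (a⁻¹)^n := by
        rw [zpow_sub₀ ha0.ne', zpow_neg, zpow_natCast, zpow_natCast, div_eq_mul_inv, inv_pow]; ring
      have hzb : b ^ ((-(n:ℤ)) - (i:ℤ)) = (b^i)⁻¹ * (b^n)⁻¹ := by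
        rw [zpow_sub₀ hb0.ne', zpow_neg, zpow_natCast, zpow_natCast, div_eq_mul_inv]; ring
      rw [habsn, hza, hzb]
      have ba : ((n:ℝ)+M)^i * (a⁻¹)^n ≤ C3 * (tm⁻¹)^n := hC3 n
      have bb : ((n:ℝ)+M)^i * (b^n)⁻¹ ≤ C4 * (tm⁻¹)^n := by
        have hb1n : (1:ℝ) ≤ b^n := one_le_pow₀ hb1.le
        have h1 : ((n:ℝ)+M)^i * (b^n)⁻¹ ≤ ((n:ℝ)+M)^i * 1^n := by
          rw [one_pow]
          exact mul_le_mul_of_nonneg_left (inv_le_one_of_one_le₀ hb1n) (by positivity)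
        exact le_trans h1 (hC4 n)
      have e1 : ((n:ℝ)+M)^i * ((a^i)⁻¹ * (a⁻¹)^n + (b^i)⁻¹ * (b^n)⁻¹) =
          (a^i)⁻¹ * (((n:ℝ)+M)^i * (a⁻¹)^n) + (b^i)⁻¹ * (((n:ℝ)+M)^i * (b^n)⁻¹) := by ring
      rw [e1]
      have e2 : ((a:ℝ)^i)⁻¹ * (((n:ℝ)+M)^i * (a⁻¹)^n) + (b^i)⁻¹ * (((n:ℝ)+M)^i * (b^n)⁻¹) ≤
          ((a^i)⁻¹*C3 + (b^i)⁻¹*C4) * (tm⁻¹)^n := by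
        have h5 := mul_le_mul_of_nonneg_left ba hainv
        have h6 := mul_le_mul_of_nonneg_left bb hbinv
        ring_nf at h5 h6 ⊢
        linarith
      refine le_trans e2 ?_
      have htmz : tm ^ (-(n:ℤ)) = (tm⁻¹)^n := by
        rw [zpow_neg, zpow_natCast, inv_pow]
      have htpz : (0:ℝ) ≤ tp ^ (-(n:ℤ)) := (zpow_pos (lt_trans one_pos htp1) _).le
      have e3 : ((a^i)⁻¹*C3 + (b^i)⁻¹*C4) * (tm⁻¹)^n ≤
          ((a^i)⁻¹*(C1+C3) + (b^i)⁻¹*(C2+C4)) * (tm⁻¹)^n :=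
        mul_le_mul_of_nonneg_right (hSle _ (Or.inr rfl)) (by positivity)
      refine le_trans e3 ?_
      rw [mul_add, htmz]
      linarith [mul_nonneg hCnn htpz]
  -- descending factorial values
  set d : ℕ → ℤ → ℝ := fun j ν => (descPochhammer ℝ j).eval ((ν:ℤ):ℝ) with hddef
  have hd0 : ∀ ν : ℤ, d 0 ν = 1 := fun ν => by
    simp [hddef, descPochhammer_zero]
  have hdsucc : ∀ (j : ℕ) (ν : ℤ), d (j+1) ν = d j ν * ((ν:ℝ) - (j:ℝ)) := fun j ν => by
    simp [hddef, descPochhammer_succ_eval]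
  have hdabs : ∀ (j : ℕ) (ν : ℤ), |d j ν| ≤ (|(ν:ℝ)| + (j:ℝ))^j := by
    intro j
    induction j with
    | zero => intro ν; simp [hd0]
    | succ j ih =>
      intro ν
      rw [hdsucc, abs_mul]
      have h1 : |(ν:ℝ) - (j:ℝ)| ≤ |(ν:ℝ)| + ((j:ℝ)+1) := by
        calc |(ν:ℝ) - (j:ℝ)| ≤ |(ν:ℝ)| + |(j:ℝ)| := abs_sub _ _
          _ ≤ |(ν:ℝ)| + ((j:ℝ)+1) := by
              rw [abs_of_nonneg (Nat.cast_nonneg j : (0:ℝ) ≤ j)]; linarith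
      calc |d j ν| * |(ν:ℝ) - (j:ℝ)|
          ≤ (|(ν:ℝ)| + (j:ℝ))^j * (|(ν:ℝ)| + ((j:ℝ)+1)) :=
            mul_le_mul (ih ν) h1 (abs_nonneg _) (by positivity)
        _ ≤ (|(ν:ℝ)| + ((j:ℝ)+1))^j * (|(ν:ℝ)| + ((j:ℝ)+1)) := by
            apply mul_le_mul_of_nonneg_right _ (by positivity)
            exact pow_le_pow_left₀ (by positivity) (by linarith) j
        _ = (|(ν:ℝ)| + ((j:ℝ)+1))^(j+1) := (pow_succ _ _).symm
        _ = (|(ν:ℝ)| + ((j+1:ℕ):ℝ))^(j+1) := by push_cast; ring_nf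
  -- uniform norm bound for the terms
  have hnormle : ∀ (j : ℕ) (C : ℝ),
      (∀ ν : ℤ, ∀ t ∈ Set.Icc a b, (|(ν:ℝ)| + (j:ℝ))^j * t^(ν - (j:ℤ)) ≤ C * (tm^ν + tp^ν)) →
      ∀ ν : ℤ, ∀ t ∈ Set.Icc a b,
        ‖d j ν * t^(ν - (j:ℤ)) * w (-ν)‖ ≤ C * (tm^ν * |w (-ν)| + tp^ν * |w (-ν)|) := by
    intro j C hC ν t ht
    have ht0 : 0 < t := lt_of_lt_of_le ha0 ht.1
    rw [Real.norm_eq_abs, abs_mul, abs_mul, abs_of_pos (zpow_pos ht0 _)]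
    calc |d j ν| * t ^ (ν - (j:ℤ)) * |w (-ν)|
        ≤ ((|(ν:ℝ)| + (j:ℝ))^j * t ^ (ν - (j:ℤ))) * |w (-ν)| := by
          apply mul_le_mul_of_nonneg_right _ (abs_nonneg _)
          exact mul_le_mul_of_nonneg_right (hdabs j ν) (zpow_pos ht0 _).le
      _ ≤ (C * (tm ^ ν + tp ^ ν)) * |w (-ν)| :=
          mul_le_mul_of_nonneg_right (hC ν t ht) (abs_nonneg _)
      _ = C * (tm ^ ν * |w (-ν)| + tp ^ ν * |w (-ν)|) := by ring
  have hsum1 : ∀ (j : ℕ), ∀ t ∈ Set.Icc a b,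
      Summable fun ν : ℤ => d j ν * t ^ (ν - (j:ℤ)) * w (-ν) := by
    intro j t ht
    obtain ⟨C, hC0, hC⟩ := core j (j:ℝ) (Nat.cast_nonneg j)
    exact Summable.of_norm_bounded (hW.mul_left C) fun ν => hnormle j C hC ν t ht
  -- term-by-term differentiation
  have hIooIcc : Set.Ioo a b ⊆ Set.Icc a b := Set.Ioo_subset_Icc_self
  have hder : ∀ (j : ℕ), ∀ t ∈ Set.Ioo a b,
      HasDerivAt (fun z : ℝ => ∑' ν : ℤ, d j ν * z ^ (ν - (j:ℤ)) * w (-ν))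
        (∑' ν : ℤ, d (j+1) ν * t ^ (ν - ((j+1:ℕ):ℤ)) * w (-ν)) t := by
    intro j t ht
    obtain ⟨C, hC0, hC⟩ := core (j+1) ((j+1:ℕ):ℝ) (Nat.cast_nonneg _)
    refine hasDerivAt_tsum_of_isPreconnected (hW.mul_left C) isOpen_Ioo
      isPreconnected_Ioo (fun ν y hy => ?_) (fun ν y hy => hnormle (j+1) C hC ν y (hIooIcc hy))
      (Set.mem_Ioo.mpr ⟨ha1, hb1⟩) ?_ ht
    · -- derivative of individual term
      have hy0 : y ≠ 0 := ne_of_gt (lt_of_lt_of_le ha0 (hIooIcc hy).1)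
      have base := hasDerivAt_zpow (ν - (j:ℤ)) y (Or.inl hy0)
      have h2 := (base.const_mul (d j ν)).mul_const (w (-ν))
      convert h2 using 1
      on_goal 1 => rfl
      rw [hdsucc]
      have hexp : ν - ((j+1:ℕ):ℤ) = ν - (j:ℤ) - 1 := by push_cast; ring
      rw [hexp]
      push_cast
      ring
    · exact hsum1 j 1 h1mem
  -- identification of iterated derivatives on the interval
  have hkey : ∀ (j : ℕ), ∀ t ∈ Set.Ioo a b,
      iteratedDeriv j F t = ∑' ν : ℤ, d j ν * t ^ (ν - (j:ℤ)) * w (-ν) := by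
    intro j
    induction j with
    | zero =>
      intro t ht
      rw [iteratedDeriv_zero, hFdef]
      exact tsum_congr fun ν => by rw [hd0, one_mul, Nat.cast_zero, sub_zero]
    | succ j ih =>
      intro t ht
      rw [iteratedDeriv_succ]
      have heq : deriv (iteratedDeriv j F) t =
          deriv (fun z : ℝ => ∑' ν : ℤ, d j ν * z ^ (ν - (j:ℤ)) * w (-ν)) t := by
        apply Filter.EventuallyEq.deriv_eq
        filter_upwards [isOpen_Ioo.mem_nhds ht] with y hy using ih y hy
      rw [heq, (hder j t ht).deriv]
  have h1Ioo : (1:ℝ) ∈ Set.Ioo a b := ⟨ha1, hb1⟩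
  have hFj : ∀ j : ℕ, iteratedDeriv j F 1 = ∑' ν : ℤ, d j ν * w (-ν) := by
    intro j
    rw [hkey j 1 h1Ioo]
    exact tsum_congr fun ν => by rw [one_zpow, mul_one]
  have hsumd : ∀ j : ℕ, Summable fun ν : ℤ => d j ν * w (-ν) := by
    intro j
    have h := hsum1 j 1 h1mem
    refine (summable_congr fun ν => ?_).mp h
    rw [one_zpow, mul_one]
  -- master computation
  have master : ∀ (n : ℕ) (x : ℤ),
      (Summable fun k : ℤ => |(k : ℝ) ^ n * w (x - k)|) ∧
      ∃ c : ℕ → ℝ, c n = 1 ∧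
        ∑' k : ℤ, (k:ℝ)^n * w (x - k) =
          ∑ j ∈ Finset.range (n+1), c j * iteratedDeriv j F 1 := by
    intro n x
    have hcomp : ∀ ν : ℤ, ((((Equiv.addRight x) ν : ℤ)):ℝ)^n * w (x - ((Equiv.addRight x) ν)) =
        ((ν + x : ℤ):ℝ)^n * w (-ν) := by
      intro ν
      simp only [Equiv.coe_addRight]
      rw [show x - (ν + x) = -ν by ring]
    have hA : Summable fun ν : ℤ => |((ν + x : ℤ):ℝ)^n * w (-ν)| := by
      obtain ⟨C, hC0, hC⟩ := core n |(x:ℝ)| (abs_nonneg _)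
      apply Summable.of_nonneg_of_le (fun ν => abs_nonneg _) _ (hW.mul_left C)
      intro ν
      rw [abs_mul, abs_pow]
      calc |((ν+x:ℤ):ℝ)|^n * |w (-ν)|
          ≤ (|(ν:ℝ)| + |(x:ℝ)|)^n * |w (-ν)| := by
            apply mul_le_mul_of_nonneg_right _ (abs_nonneg _)
            apply pow_le_pow_left₀ (abs_nonneg _)
            push_cast
            exact abs_add_le _ _
        _ = ((|(ν:ℝ)| + |(x:ℝ)|)^n * (1:ℝ)^(ν - (n:ℤ))) * |w (-ν)| := by
            rw [one_zpow, mul_one]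
        _ ≤ (C * (tm^ν + tp^ν)) * |w (-ν)| :=
            mul_le_mul_of_nonneg_right (hC ν 1 h1mem) (abs_nonneg _)
        _ = C * (tm ^ ν * |w (-ν)| + tp ^ ν * |w (-ν)|) := by ring
    constructor
    · refine (Equiv.summable_iff (Equiv.addRight x)).mp ?_
      refine (summable_congr fun ν => ?_).mpr hA
      show |((((Equiv.addRight x) ν : ℤ)):ℝ)^n * w (x - ((Equiv.addRight x) ν))| = _
      rw [hcomp]
    · -- polynomial expansion
      have hmon : ((Polynomial.X + Polynomial.C ((x:ℤ):ℝ))^n).Monic :=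
        (Polynomial.monic_X_add_C _).pow _
      have hnd : ((Polynomial.X + Polynomial.C ((x:ℤ):ℝ))^n).natDegree = n := by
        rw [Polynomial.natDegree_pow, Polynomial.natDegree_X_add_C, mul_one]
      obtain ⟨c, hcn, hcval⟩ := stmt5_aux_poly n _ hnd.le
      have hcn1 : c n = 1 := by
        rw [hcn]
        have := hmon.coeff_natDegree
        rwa [hnd] at this
      refine ⟨c, hcn1, ?_⟩
      have hexp : ∀ ν : ℤ, ((ν + x : ℤ):ℝ)^n = ∑ j ∈ Finset.range (n+1), c j * d j ν := by
        intro ν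
        have h := hcval ((ν:ℤ):ℝ)
        rw [Polynomial.eval_pow, Polynomial.eval_add, Polynomial.eval_X, Polynomial.eval_C] at h
        rw [show (((ν + x : ℤ)):ℝ) = ((ν:ℤ):ℝ) + ((x:ℤ):ℝ) by push_cast; ring]
        exact h
      calc ∑' k : ℤ, (k:ℝ)^n * w (x - k)
          = ∑' ν : ℤ, ((ν + x : ℤ):ℝ)^n * w (-ν) := by
            rw [← Equiv.tsum_eq (Equiv.addRight x) (fun k : ℤ => (k:ℝ)^n * w (x - k))]
            exact tsum_congr fun ν => hcomp ν
        _ = ∑' ν : ℤ, ∑ j ∈ Finset.range (n+1), c j * (d j ν * w (-ν)) := by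
            refine tsum_congr fun ν => ?_
            rw [hexp, Finset.sum_mul]
            exact Finset.sum_congr rfl fun j _ => by ring
        _ = ∑ j ∈ Finset.range (n+1), ∑' ν : ℤ, c j * (d j ν * w (-ν)) :=
            Summable.tsum_finsetSum fun j _ => (hsumd j).mul_left (c j)
        _ = ∑ j ∈ Finset.range (n+1), c j * iteratedDeriv j F 1 :=
            Finset.sum_congr rfl fun j _ => by rw [tsum_mul_left, hFj j]
  constructor
  · intro x hx
    obtain ⟨hs, c, hcn, heq⟩ := master m x
    refine ⟨hs, ?_⟩
    rw [heq, Finset.sum_range_succ, hcn, one_mul]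
    have hz : ∑ j ∈ Finset.range m, c j * iteratedDeriv j F 1 = 0 :=
      Finset.sum_eq_zero fun j hj => by
        rw [hroot j (Finset.mem_range.mp hj), mul_zero]
    rw [hz, zero_add]
  · intro D hD x hx
    obtain ⟨-, c, -, heq⟩ := master D x
    rw [heq]
    exact Finset.sum_eq_zero fun j hj => by
      rw [hD j (Nat.lt_succ_iff.mp (Finset.mem_range.mp hj)), mul_zero]
end

section
/- Let u : ℤ^d → ℝ be not identically zero with support contained in {-n, ..., 0}^d. Then there exist nonnegative integers M_1, ..., M_d, each at most n, and a nonzero real constant c, such that for all x = (x_1, ..., x_d) with every x_i ≥ 1, Σ_{k∈ℕ^d} k_1^{M_1} ⋯ k_d^{M_d} · u(x_1 - k_1, ..., x_d - k_d) = c. In particular, setting b_k = k_1^{M_1}⋯k_d^{M_d}, the coefficients satisfy |b_k| ≤ (L+n)^{d·n} for all k ∈ {0,...,L+n}^d. -/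
private lemma vanish_moments : ∀ (d n : ℕ) (v : (Fin d → Fin (n+1)) → ℝ),
    (∀ t : Fin d → Fin (n+1),
      ∑ j : Fin d → Fin (n+1), (∏ i, ((j i : ℕ) : ℝ) ^ ((t i : ℕ))) * v j = 0) →
    ∀ j, v j = 0 := by
  intro d
  induction d with
  | zero =>
    intro n v h j
    have h0 := h j
    rw [Fintype.sum_subsingleton _ j] at h0
    simpa using h0
  | succ d ih =>
    intro n v h j
    have hinj : Function.Injective (fun j0 : Fin (n+1) => ((j0 : ℕ) : ℝ)) := by
      intro a b hab
      simp only at hab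
      exact Fin.ext (by exact_mod_cast hab)
    have reindex : ∀ G : (Fin (d+1) → Fin (n+1)) → ℝ,
        ∑ j : Fin (d+1) → Fin (n+1), G j
          = ∑ a : Fin (n+1), ∑ g : Fin d → Fin (n+1), G (Fin.cons a g) := by
      intro G
      calc ∑ j : Fin (d+1) → Fin (n+1), G j
          = ∑ p : Fin (n+1) × (Fin d → Fin (n+1)), G (Fin.cons p.1 p.2) :=
            (Fintype.sum_equiv (Fin.consEquiv fun _ => Fin (n+1)) _ _ (fun p => rfl)).symm
        _ = ∑ a : Fin (n+1), ∑ g : Fin d → Fin (n+1), G (Fin.cons a g) :=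
            Fintype.sum_prod_type _
    have step1 : ∀ (trest : Fin d → Fin (n+1)) (j0 : Fin (n+1)),
        (∑ g : Fin d → Fin (n+1),
          (∏ i, ((g i : ℕ) : ℝ) ^ ((trest i : ℕ))) * v (Fin.cons j0 g)) = 0 := by
      intro trest
      have h1 : ∀ t0 : Fin (n+1),
          ∑ j0 : Fin (n+1),
            (∑ g : Fin d → Fin (n+1),
              (∏ i, ((g i : ℕ) : ℝ) ^ ((trest i : ℕ))) * v (Fin.cons j0 g))
              * ((j0 : ℕ) : ℝ) ^ (t0 : ℕ) = 0 := by
        intro t0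
        have h2 := h (Fin.cons t0 trest)
        rw [reindex] at h2
        rw [← h2]
        refine Finset.sum_congr rfl fun j0 _ => ?_
        rw [Finset.sum_mul]
        refine Finset.sum_congr rfl fun g _ => ?_
        rw [Fin.prod_univ_succ]
        simp only [Fin.cons_zero, Fin.cons_succ]
        ring
      have hz := Matrix.eq_zero_of_forall_pow_sum_mul_pow_eq_zero hinj h1
      exact fun j0 => congrFun hz j0
    have step2 : ∀ j0 g, v (Fin.cons j0 g) = 0 := fun j0 =>
      ih n (fun g => v (Fin.cons j0 g)) (fun trest => step1 trest j0)
    rw [← Fin.cons_self_tail j]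
    exact step2 (j 0) (Fin.tail j)

/-- Dimension-reduction construction: for a nonzero `u : ℤ^d → ℝ` supported in
`{-n,…,0}^d` there are exponents `M_i ≤ n` and a nonzero constant `c` such that
`∑_{k∈ℕ^d} k_1^{M_1} ⋯ k_d^{M_d} u(x - k) = c` for all `x` with all coordinates `≥ 1`;
moreover the coefficients `b_k = ∏ k_i^{M_i}` satisfy `|b_k| ≤ (L+n)^{d n}` on
`{0,…,L+n}^d`. -/
theorem stmt_7 (d n : ℕ) (hd : 0 < d) (u : (Fin d → ℤ) → ℝ) (hu : u ≠ 0)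
    (hsupp : ∀ x : Fin d → ℤ, u x ≠ 0 → ∀ i, -(n : ℤ) ≤ x i ∧ x i ≤ 0) :
    ∃ (M : Fin d → ℕ) (c : ℝ), (∀ i, M i ≤ n) ∧ c ≠ 0 ∧
      (∀ x : Fin d → ℤ, (∀ i, 1 ≤ x i) →
        ∑ᶠ k : Fin d → ℕ, (∏ i, ((k i : ℝ)) ^ (M i)) * u (fun i => x i - (k i : ℤ)) = c) ∧
      ∀ (L : ℕ) (k : Fin d → ℕ), (∀ i, k i ≤ L + n) →
        |∏ i, ((k i : ℝ)) ^ (M i)| ≤ ((L : ℝ) + n) ^ (d * n) := by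
  classical
  set μ : (Fin d → ℕ) → ℝ := fun t =>
    ∑ j : Fin d → Fin (n+1), (∏ i, ((j i : ℕ) : ℝ) ^ t i) * u (fun i => -((j i : ℕ) : ℤ))
    with hμdef
  -- some moment is nonzero
  have hne : ∃ t : Fin d → Fin (n+1), μ (fun i => (t i : ℕ)) ≠ 0 := by
    by_contra hcon
    push_neg at hcon
    apply hu
    funext x
    simp only [Pi.zero_apply]
    by_contra hx
    have hs := hsupp x hx
    have hzero := vanish_moments d n (fun j => u (fun i => -((j i : ℕ) : ℤ)))
      (fun t => hcon t) (fun i => ⟨(-(x i)).toNat, by have := hs i; omega⟩)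
    apply hx
    rw [← hzero]
    congr 1
    funext i
    have := hs i
    simp only
    omega
  -- choose minimal nonzero moment
  obtain ⟨t0, ht0mem, ht0min⟩ := Finset.exists_min_image
    (Finset.univ.filter fun t : Fin d → Fin (n+1) => μ (fun i => (t i : ℕ)) ≠ 0)
    (fun t => ∑ i, (t i : ℕ))
    (by obtain ⟨t, ht⟩ := hne; exact ⟨t, Finset.mem_filter.mpr ⟨Finset.mem_univ _, ht⟩⟩)
  set M : Fin d → ℕ := fun i => (t0 i : ℕ) with hMdef
  have hMn : ∀ i, M i ≤ n := fun i => Fin.is_le _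
  have hc0 : μ M ≠ 0 := (Finset.mem_filter.mp ht0mem).2
  have hmin : ∀ t : Fin d → ℕ, (∀ i, t i ≤ M i) → t ≠ M → μ t = 0 := by
    intro t hle hne'
    by_contra hμt
    have htn : ∀ i, t i < n + 1 := fun i => by have := hMn i; have := hle i; omega
    have hmem : (fun i => (⟨t i, htn i⟩ : Fin (n+1))) ∈
        Finset.univ.filter fun t : Fin d → Fin (n+1) => μ (fun i => (t i : ℕ)) ≠ 0 :=
      Finset.mem_filter.mpr ⟨Finset.mem_univ _, by simpa using hμt⟩
    have hge := ht0min _ hmem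
    simp only [Fin.val_mk] at hge
    have hlt : ∑ i, t i < ∑ i, M i := by
      obtain ⟨i, hi⟩ := Function.ne_iff.mp hne'
      exact Finset.sum_lt_sum (fun i _ => hle i)
        ⟨i, Finset.mem_univ i, lt_of_le_of_ne (hle i) hi⟩
    exact absurd hlt (not_lt.mpr hge)
  refine ⟨M, μ M, hMn, hc0, ?_, ?_⟩
  · -- main identity
    intro x hx
    set s : Finset (Fin d → ℕ) :=
      Fintype.piFinset fun i => Finset.Icc (x i).toNat ((x i).toNat + n) with hsdef
    have hsub : (Function.support fun k : Fin d → ℕ =>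
        (∏ i, ((k i : ℝ)) ^ (M i)) * u (fun i => x i - (k i : ℤ))) ⊆ ↑s := by
      intro k hk
      simp only [Function.mem_support] at hk
      have hu' : u (fun i => x i - (k i : ℤ)) ≠ 0 := fun h0 => hk (by rw [h0, mul_zero])
      have hks := hsupp _ hu'
      simp only [hsdef, Finset.coe_sort_coe, Finset.mem_coe, Fintype.mem_piFinset,
        Finset.mem_Icc]
      intro i
      have h1 := (hks i).1
      have h2 := (hks i).2
      have hx1 := hx i
      omega
    rw [finsum_eq_sum_of_support_subset _ hsub]
    -- reindex to the box
    have hreidx : ∑ k ∈ s, (∏ i, ((k i : ℝ)) ^ (M i)) * u (fun i => x i - (k i : ℤ))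
        = ∑ j : Fin d → Fin (n+1),
            (∏ i, ((x i : ℝ) + ((j i : ℕ) : ℝ)) ^ (M i)) * u (fun i => -((j i : ℕ) : ℤ)) := by
      refine Finset.sum_bij'
        (fun k _ => fun i => (⟨min (k i - (x i).toNat) n, by omega⟩ : Fin (n+1)))
        (fun j _ => fun i => (x i).toNat + (j i : ℕ)) ?_ ?_ ?_ ?_ ?_
      · intro k hk; exact Finset.mem_univ _
      · intro j hj
        simp only [hsdef, Fintype.mem_piFinset, Finset.mem_Icc]
        intro i
        have := (j i).is_le
        omega
      · intro k hk
        funext i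
        simp only [hsdef, Fintype.mem_piFinset, Finset.mem_Icc] at hk
        have := hk i
        simp only [Fin.val_mk]
        omega
      · intro j hj
        funext i
        have := (j i).is_le
        apply Fin.ext
        simp only [Fin.val_mk]
        omega
      · intro k hk
        simp only [hsdef, Fintype.mem_piFinset, Finset.mem_Icc] at hk
        congr 1
        · refine Finset.prod_congr rfl fun i _ => ?_
          congr 1
          have hki := hk i
          have hx1 := hx i
          have hz : ((k i : ℤ)) = x i + ((min (k i - (x i).toNat) n : ℕ) : ℤ) := by omega
          have hr : ((k i : ℤ) : ℝ)
              = ((x i : ℤ) : ℝ) + (((min (k i - (x i).toNat) n : ℕ) : ℤ) : ℝ) := by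
            rw [hz]; push_cast; ring
          push_cast at hr ⊢
          exact hr
        · congr 1
          funext i
          have hki := hk i
          have hx1 := hx i
          simp only [Fin.val_mk]
          omega
    rw [hreidx]
    -- binomial expansion
    have expand : ∀ j : Fin d → Fin (n+1),
        (∏ i, ((x i : ℝ) + ((j i : ℕ) : ℝ)) ^ (M i))
          = ∑ m ∈ Fintype.piFinset (fun i => Finset.range (M i + 1)),
              ∏ i, (((x i : ℤ) : ℝ) ^ (m i) * ((j i : ℕ) : ℝ) ^ (M i - m i)
                * ((M i).choose (m i) : ℝ)) := by
      intro j
      calc (∏ i, ((x i : ℝ) + ((j i : ℕ) : ℝ)) ^ (M i))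
          = ∏ i, ∑ m ∈ Finset.range (M i + 1),
              (((x i : ℤ) : ℝ) ^ m * ((j i : ℕ) : ℝ) ^ (M i - m)
                * ((M i).choose m : ℝ)) :=
            Finset.prod_congr rfl fun i _ => add_pow _ _ _
        _ = _ := Finset.prod_univ_sum _ _
    calc ∑ j : Fin d → Fin (n+1),
          (∏ i, ((x i : ℝ) + ((j i : ℕ) : ℝ)) ^ (M i)) * u (fun i => -((j i : ℕ) : ℤ))
        = ∑ m ∈ Fintype.piFinset (fun i => Finset.range (M i + 1)),
            (∏ i, (((x i : ℤ) : ℝ) ^ (m i) * ((M i).choose (m i) : ℝ)))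
              * μ (fun i => M i - m i) := by
          simp_rw [expand, Finset.sum_mul]
          rw [Finset.sum_comm]
          refine Finset.sum_congr rfl fun m _ => ?_
          rw [hμdef]
          simp only
          rw [Finset.mul_sum]
          refine Finset.sum_congr rfl fun j _ => ?_
          rw [Finset.prod_mul_distrib, Finset.prod_mul_distrib, Finset.prod_mul_distrib]
          ring
      _ = μ M := by
          rw [Finset.sum_eq_single_of_mem (fun _ => 0)
            (by simp [Fintype.mem_piFinset])]
          · simp
          · intro m hm hm0
            have hmle : ∀ i, m i ≤ M i := by
              intro i
              have := Fintype.mem_piFinset.mp hm i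
              simp only [Finset.mem_range] at this
              omega
            have hz : μ (fun i => M i - m i) = 0 := by
              apply hmin _ (fun i => Nat.sub_le _ _)
              intro hEq
              obtain ⟨i, hi⟩ := Function.ne_iff.mp hm0
              have := congrFun hEq i
              try simp only at this hi
              have := hmle i
              omega
            rw [hz, mul_zero]
  · -- bound
    intro L k hk
    have hnat : (∏ i, k i ^ (M i)) ≤ (L + n) ^ (d * n) := by
      rcases Nat.eq_zero_or_pos (L + n) with hLn | hLn
      · have hn0 : n = 0 := by omega
        have hM0 : ∀ i, M i = 0 := fun i => by have := hMn i; omega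
        simp [hM0, hn0]
      · calc (∏ i, k i ^ (M i)) ≤ ∏ _i : Fin d, (L + n) ^ n := by
              refine Finset.prod_le_prod' fun i _ => ?_
              calc k i ^ (M i) ≤ (L + n) ^ (M i) := Nat.pow_le_pow_left (hk i) _
                _ ≤ (L + n) ^ n := Nat.pow_le_pow_right hLn (hMn i)
            _ = (L + n) ^ (d * n) := by
              rw [Finset.prod_const, Finset.card_univ, Fintype.card_fin, ← pow_mul, Nat.mul_comm]
    have habs : |∏ i, ((k i : ℝ)) ^ (M i)| = ((∏ i, k i ^ (M i) : ℕ) : ℝ) := by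
      rw [abs_of_nonneg (Finset.prod_nonneg fun i _ => pow_nonneg (Nat.cast_nonneg _) _)]
      push_cast
      rfl
    rw [habs]
    calc ((∏ i, k i ^ (M i) : ℕ) : ℝ) ≤ (((L + n) ^ (d * n) : ℕ) : ℝ) := by
          exact_mod_cast hnat
      _ = ((L : ℝ) + n) ^ (d * n) := by push_cast; ring
end

section
/- Let A and B be self-adjoint operators on a finite-dimensional complex inner product space with rank(A - B) ≤ r, and let ρ : ℝ → ℝ be continuously differentiable with ρ' integrable and ρ having limits at ±∞ (e.g., ρ smooth, nondecreasing, equal to -1 near -∞ and 0 near +∞). Then |Tr(ρ(A)) - Tr(ρ(B))| ≤ r · ∫_ℝ |ρ'(x)| dx. -/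
open Matrix Module Submodule Finset

noncomputable section
variable {N : ℕ}

lemma finrank_range_toEuclideanLin (M : Matrix (Fin N) (Fin N) ℂ) :
    finrank ℂ (LinearMap.range (toEuclideanLin M)) = M.rank := by
  have h : toEuclideanLin M = ((WithLp.linearEquiv 2 ℂ (Fin N → ℂ)).symm.toLinearMap.comp
      M.mulVecLin).comp (WithLp.linearEquiv 2 ℂ (Fin N → ℂ)).toLinearMap := by
    ext x; rfl
  rw [h, LinearMap.comp_assoc, LinearMap.range_comp,
    LinearMap.range_comp_of_range_eq_top _ (LinearEquiv.range _)]
  exact LinearEquiv.finrank_map_eq _ _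

lemma finrank_ker_toEuclideanLin (M : Matrix (Fin N) (Fin N) ℂ) :
    M.rank + finrank ℂ (LinearMap.ker (toEuclideanLin M)) = N := by
  have := LinearMap.finrank_range_add_finrank_ker (toEuclideanLin M)
  rwa [finrank_range_toEuclideanLin, finrank_euclideanSpace, Fintype.card_fin] at this

lemma toEuclideanLin_apply_eigenvectorBasis {M : Matrix (Fin N) (Fin N) ℂ} (hM : M.IsHermitian)
    (i : Fin N) : toEuclideanLin M (hM.eigenvectorBasis i) =
      (hM.eigenvalues i : ℂ) • hM.eigenvectorBasis i := by
  have := hM.mulVec_eigenvectorBasis i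
  apply (WithLp.equiv 2 (Fin N → ℂ)).injective
  simp only [WithLp.equiv_apply, ofLp_toEuclideanLin_apply]
  rw [this]
  ext j
  simp [Complex.real_smul]

variable {N : ℕ}

lemma normsq_eq_sum (b : OrthonormalBasis (Fin N) ℂ (EuclideanSpace ℂ (Fin N)))
    (x : EuclideanSpace ℂ (Fin N)) :
    RCLike.re (inner ℂ x x : ℂ) = ∑ i, ‖b.repr x i‖ ^ 2 := by
  rw [inner_self_eq_norm_sq, ← b.repr.norm_map x, EuclideanSpace.norm_eq,
    Real.sq_sqrt (by positivity)]

lemma quad_eq_sum {M : Matrix (Fin N) (Fin N) ℂ} (hM : M.IsHermitian)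
    (x : EuclideanSpace ℂ (Fin N)) :
    RCLike.re (inner ℂ x (toEuclideanLin M x) : ℂ) =
      ∑ i, hM.eigenvalues i * ‖hM.eigenvectorBasis.repr x i‖ ^ 2 := by
  set b := hM.eigenvectorBasis with hb
  have hT : toEuclideanLin M x = ∑ i, (b.repr x i * (hM.eigenvalues i : ℂ)) • b i := by
    conv_lhs => rw [← b.sum_repr x, map_sum]
    refine Finset.sum_congr rfl fun i _ => ?_
    rw [_root_.map_smul, toEuclideanLin_apply_eigenvectorBasis hM i, smul_smul]
  have : (inner ℂ x (toEuclideanLin M x) : ℂ) =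
      ∑ i, (hM.eigenvalues i : ℂ) * ((‖b.repr x i‖ : ℂ) ^ 2) := by
    rw [hT, inner_sum]
    refine Finset.sum_congr rfl fun i _ => ?_
    rw [inner_smul_right, ← inner_conj_symm x (b i), ← OrthonormalBasis.repr_apply_apply]
    rw [show b.repr x i * ↑(hM.eigenvalues i) * (starRingEnd ℂ) (b.repr x i)
      = (hM.eigenvalues i : ℂ) * ((b.repr x i) * (starRingEnd ℂ) (b.repr x i)) by ring,
      RCLike.mul_conj]
    push_cast
    rfl
  rw [this, RCLike.re_to_complex, Complex.re_sum]
  refine Finset.sum_congr rfl fun i _ => ?_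
  norm_cast

lemma repr_eq_zero_of_mem_span (b : OrthonormalBasis (Fin N) ℂ (EuclideanSpace ℂ (Fin N)))
    (s : Set (Fin N)) {x : EuclideanSpace ℂ (Fin N)}
    (hx : x ∈ span ℂ (b '' s)) {i : Fin N} (hi : i ∉ s) : b.repr x i = 0 := by
  induction hx using Submodule.span_induction with
  | mem y hy =>
    obtain ⟨j, hj, rfl⟩ := hy
    rw [b.repr_self]
    have : i ≠ j := fun h => hi (h ▸ hj)
    simp [EuclideanSpace.single_apply, this]
  | zero => simp
  | add y z _ _ hy hz => simp [map_add, hy, hz]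
  | smul c y _ hy => simp [_root_.map_smul, hy]

lemma finrank_span_image (b : OrthonormalBasis (Fin N) ℂ (EuclideanSpace ℂ (Fin N)))
    (s : Finset (Fin N)) : finrank ℂ (span ℂ (b '' ↑s)) = s.card := by
  classical
  have hinj : Function.Injective b := b.orthonormal.linearIndependent.injective
  have hli : LinearIndependent ℂ (fun y : (b '' ↑s) => (y : EuclideanSpace ℂ (Fin N))) :=
    (show LinearIndepOn ℂ b (↑s : Set (Fin N)) from
      b.orthonormal.linearIndependent.comp ((↑) : (↑s : Set (Fin N)) → Fin N)
      Subtype.coe_injective).id_image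
  rw [finrank_span_set_eq_card hli, Set.toFinset_image]
  simp [Finset.card_image_of_injective _ hinj]

lemma counting_le {A B : Matrix (Fin N) (Fin N) ℂ} (hA : A.IsHermitian) (hB : B.IsHermitian)
    (t : ℝ) :
    (Finset.univ.filter fun i => t ≤ hA.eigenvalues i).card ≤
      (Finset.univ.filter fun i => t ≤ hB.eigenvalues i).card + (A - B).rank := by
  classical
  by_contra hcon
  push_neg at hcon
  set sA : Finset (Fin N) := Finset.univ.filter (fun i => t ≤ hA.eigenvalues i) with hsA
  set sB : Finset (Fin N) := Finset.univ.filter (fun i => ¬ t ≤ hB.eigenvalues i) with hsB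
  set SA : Submodule ℂ (EuclideanSpace ℂ (Fin N)) := span ℂ (hA.eigenvectorBasis '' ↑sA)
  set SB : Submodule ℂ (EuclideanSpace ℂ (Fin N)) := span ℂ (hB.eigenvectorBasis '' ↑sB)
  set K := LinearMap.ker (toEuclideanLin (A - B)) with hKdef
  have hdSA : finrank ℂ SA = sA.card := finrank_span_image _ _
  have hdSB : finrank ℂ SB = sB.card := finrank_span_image _ _
  have hcardB : (Finset.univ.filter fun i => t ≤ hB.eigenvalues i).card + sB.card = N := by
    rw [hsB, Finset.card_filter_add_card_filter_not, Finset.card_univ, Fintype.card_fin]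
  have hK : (A - B).rank + finrank ℂ K = N := finrank_ker_toEuclideanLin _
  have hN : finrank ℂ (EuclideanSpace ℂ (Fin N)) = N := by
    rw [finrank_euclideanSpace, Fintype.card_fin]
  have h1 : finrank ℂ (SA ⊔ K : Submodule ℂ (EuclideanSpace ℂ (Fin N)))
      + finrank ℂ (SA ⊓ K : Submodule ℂ (EuclideanSpace ℂ (Fin N)))
      = finrank ℂ SA + finrank ℂ K := Submodule.finrank_sup_add_finrank_inf_eq _ _
  have h1' : finrank ℂ (SA ⊔ K : Submodule ℂ (EuclideanSpace ℂ (Fin N))) ≤ N :=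
    le_trans (Submodule.finrank_le _) (le_of_eq hN)
  have h2 : finrank ℂ ((SA ⊓ K) ⊔ SB : Submodule ℂ (EuclideanSpace ℂ (Fin N)))
      + finrank ℂ ((SA ⊓ K) ⊓ SB : Submodule ℂ (EuclideanSpace ℂ (Fin N)))
      = finrank ℂ (SA ⊓ K : Submodule ℂ (EuclideanSpace ℂ (Fin N))) + finrank ℂ SB :=
    Submodule.finrank_sup_add_finrank_inf_eq _ _
  have h2' : finrank ℂ ((SA ⊓ K) ⊔ SB : Submodule ℂ (EuclideanSpace ℂ (Fin N))) ≤ N :=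
    le_trans (Submodule.finrank_le _) (le_of_eq hN)
  have hW : 0 < finrank ℂ ((SA ⊓ K) ⊓ SB : Submodule ℂ (EuclideanSpace ℂ (Fin N))) := by omega
  obtain ⟨x, hx0⟩ := Module.finrank_pos_iff_exists_ne_zero.mp hW
  obtain ⟨hxAK, hxB⟩ := x.2
  obtain ⟨hxA, hxK⟩ := hxAK
  have hx0' : (x : EuclideanSpace ℂ (Fin N)) ≠ 0 := fun h => hx0 (Subtype.ext h)
  -- equal actions of A and B on x
  have hABx : toEuclideanLin A (x : EuclideanSpace ℂ (Fin N)) = toEuclideanLin B x := by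
    have h0 : toEuclideanLin (A - B) (x : EuclideanSpace ℂ (Fin N)) = 0 := hxK
    have h := congrArg (fun y => y + toEuclideanLin B (x : EuclideanSpace ℂ (Fin N))) h0
    simpa [map_sub, LinearMap.sub_apply, sub_add_cancel] using h
  -- positivity of norm
  have hS : 0 < RCLike.re (inner ℂ (x : EuclideanSpace ℂ (Fin N)) (x : EuclideanSpace ℂ (Fin N)) : ℂ) := by
    rw [inner_self_eq_norm_sq]
    have := norm_pos_iff.mpr hx0'
    positivity
  -- lower bound from A
  have hqA : t * RCLike.re (inner ℂ (x : EuclideanSpace ℂ (Fin N)) (x : EuclideanSpace ℂ (Fin N)) : ℂ)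
      ≤ RCLike.re (inner ℂ (x : EuclideanSpace ℂ (Fin N)) (toEuclideanLin A x) : ℂ) := by
    rw [quad_eq_sum hA, normsq_eq_sum hA.eigenvectorBasis, Finset.mul_sum]
    refine Finset.sum_le_sum fun i _ => ?_
    by_cases hi : i ∈ sA
    · have : t ≤ hA.eigenvalues i := by
        rw [hsA, Finset.mem_filter] at hi; exact hi.2
      nlinarith [sq_nonneg ‖hA.eigenvectorBasis.repr x i‖]
    · rw [repr_eq_zero_of_mem_span hA.eigenvectorBasis _ hxA hi]
      simp
  -- strict upper bound from B
  have hqB : RCLike.re (inner ℂ (x : EuclideanSpace ℂ (Fin N)) (toEuclideanLin B x) : ℂ)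
      < t * RCLike.re (inner ℂ (x : EuclideanSpace ℂ (Fin N)) (x : EuclideanSpace ℂ (Fin N)) : ℂ) := by
    rw [quad_eq_sum hB, normsq_eq_sum hB.eigenvectorBasis, Finset.mul_sum]
    have hex : ∃ i, hB.eigenvectorBasis.repr x i ≠ 0 := by
      by_contra hall
      push_neg at hall
      apply hx0'
      have : hB.eigenvectorBasis.repr (x : EuclideanSpace ℂ (Fin N)) = 0 := by
        ext i; simpa using hall i
      simpa using congrArg hB.eigenvectorBasis.repr.symm this
    obtain ⟨i0, hi0⟩ := hex
    have hi0B : i0 ∈ sB := by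
      by_contra h
      exact hi0 (repr_eq_zero_of_mem_span hB.eigenvectorBasis _ hxB h)
    have hμ : hB.eigenvalues i0 < t := by
      rw [hsB, Finset.mem_filter] at hi0B
      exact lt_of_not_ge hi0B.2
    refine Finset.sum_lt_sum (fun i _ => ?_) ⟨i0, Finset.mem_univ _, ?_⟩
    · by_cases hi : i ∈ sB
      · have : hB.eigenvalues i < t := by
          rw [hsB, Finset.mem_filter] at hi; exact lt_of_not_ge hi.2
        nlinarith [sq_nonneg ‖hB.eigenvectorBasis.repr x i‖]
      · rw [repr_eq_zero_of_mem_span hB.eigenvectorBasis _ hxB hi]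
        simp
    · have hpos : 0 < ‖hB.eigenvectorBasis.repr x i0‖ ^ 2 := by
        have := norm_pos_iff.mpr hi0
        positivity
      nlinarith
  rw [hABx] at hqA
  linarith

lemma rank_neg' (M : Matrix (Fin N) (Fin N) ℂ) : (-M).rank = M.rank := by
  rw [Matrix.rank, Matrix.rank, show (-M).mulVecLin = -(M.mulVecLin) from LinearMap.ext fun v => by
      simp [Matrix.mulVecLin_apply, Matrix.neg_mulVec],
    LinearMap.range_neg]


end



open MeasureTheory Filter

/-- Finite-rank spectral shift bound: if `A`, `B` are Hermitian with `rank(A-B) ≤ r`, and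
`ρ` is `C¹` with integrable derivative and limits at `±∞`, then
`|Tr ρ(A) - Tr ρ(B)| ≤ r ∫ |ρ'|`, where `Tr ρ(A) = ∑ ρ(λ_i(A))`. -/
theorem stmt_10 (N r : ℕ) (A B : Matrix (Fin N) (Fin N) ℂ)
    (hA : A.IsHermitian) (hB : B.IsHermitian) (hrank : (A - B).rank ≤ r)
    (ρ : ℝ → ℝ) (hρ : ContDiff ℝ 1 ρ) (hint : Integrable (deriv ρ))
    (la lb : ℝ) (hla : Tendsto ρ atBot (nhds la)) (hlb : Tendsto ρ atTop (nhds lb)) :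
    |(∑ i, ρ (hA.eigenvalues i)) - ∑ i, ρ (hB.eigenvalues i)| ≤
      (r : ℝ) * ∫ x : ℝ, |deriv ρ x| := by
  classical
  have hderiv : ∀ x : ℝ, HasDerivAt ρ (deriv ρ x) x := fun x =>
    ((hρ.differentiable one_ne_zero) x).hasDerivAt
  have hFTC : ∀ c : ℝ, ∫ x in Set.Iic c, deriv ρ x = ρ c - la := fun c =>
    integral_Iic_of_hasDerivAt_of_tendsto' (fun x _ => hderiv x) hint.integrableOn hla
  have hIntInd : ∀ c : ℝ, Integrable (Set.indicator (Set.Iic c) (deriv ρ)) := fun c =>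
    hint.indicator measurableSet_Iic
  set F : (Fin N → ℝ) → ℝ → ℝ := fun μ t => ∑ i, Set.indicator (Set.Iic (μ i)) (deriv ρ) t
    with hF
  have hFint : ∀ μ : Fin N → ℝ, Integrable (F μ) := fun μ =>
    integrable_finset_sum _ fun i _ => hIntInd (μ i)
  have key : ∀ μ : Fin N → ℝ, ∫ t, F μ t = ∑ i, ρ (μ i) - N * la := by
    intro μ
    rw [hF, integral_finset_sum _ fun i _ => hIntInd (μ i)]
    have : ∀ i : Fin N, ∫ t, Set.indicator (Set.Iic (μ i)) (deriv ρ) t = ρ (μ i) - la := by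
      intro i
      rw [integral_indicator measurableSet_Iic, hFTC]
    rw [Finset.sum_congr rfl fun i _ => this i, Finset.sum_sub_distrib]
    simp [Finset.card_univ, mul_comm]
  -- counting form of F
  have hFcnt : ∀ (μ : Fin N → ℝ) (t : ℝ),
      F μ t = ((Finset.univ.filter fun i => t ≤ μ i).card : ℝ) * deriv ρ t := by
    intro μ t
    rw [hF]
    simp only [Set.indicator_apply, Set.mem_Iic]
    rw [Finset.sum_ite, Finset.sum_const, Finset.sum_const_zero, add_zero, nsmul_eq_mul]
  -- pointwise bound
  have hbound : ∀ t : ℝ, |F hA.eigenvalues t - F hB.eigenvalues t| ≤ (r : ℝ) * |deriv ρ t| := by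
    intro t
    rw [hFcnt, hFcnt, ← sub_mul, abs_mul]
    gcongr
    have h1 := counting_le hA hB t
    have h2 := counting_le hB hA t
    rw [(neg_sub A B).symm, rank_neg'] at h2
    rw [abs_sub_le_iff]
    constructor
    · have : ((Finset.univ.filter fun i => t ≤ hA.eigenvalues i).card : ℝ) ≤
        ((Finset.univ.filter fun i => t ≤ hB.eigenvalues i).card : ℝ) + r := by
        exact_mod_cast h1.trans (by omega)
      linarith
    · have : ((Finset.univ.filter fun i => t ≤ hB.eigenvalues i).card : ℝ) ≤
        ((Finset.univ.filter fun i => t ≤ hA.eigenvalues i).card : ℝ) + r := by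
        exact_mod_cast h2.trans (by omega)
      linarith
  have hsub : (∑ i, ρ (hA.eigenvalues i)) - ∑ i, ρ (hB.eigenvalues i)
      = ∫ t, (F hA.eigenvalues t - F hB.eigenvalues t) := by
    rw [integral_sub (hFint _) (hFint _), key, key]
    ring
  rw [hsub]
  calc |∫ t, (F hA.eigenvalues t - F hB.eigenvalues t)|
      ≤ ∫ t, |F hA.eigenvalues t - F hB.eigenvalues t| := by
        simpa [Real.norm_eq_abs] using
          norm_integral_le_integral_norm (F hA.eigenvalues - F hB.eigenvalues)
    _ ≤ ∫ t, (r : ℝ) * |deriv ρ t| := by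
        refine integral_mono ((hFint _).sub (hFint _)).abs (hint.abs.const_mul _) ?_
        intro t
        exact hbound t
    _ = (r : ℝ) * ∫ x : ℝ, |deriv ρ x| := integral_const_mul _ _
end
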